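/- (One-step potential bound used in the proof of Theorem 2.) Let P be a finite set of paths, x, s, s* impact vectors with d_{x+s*}(p) ≥ T for all p ∈ P, and set s° = s* \ s. Let ϵ ∈ [0,1), v a vertex and x̂ > 0, and suppose that for every vertex u with s°_u > 0: r_{P,x+s,v}(x̂)/x̂ ≥ (1−ϵ) · r_{P,x+s,u}(s°_u)/s°_u. Then ∑_{p∈P} (T − d_{x+s}(p)) ≤ (‖s*‖ / (x̂(1−ϵ))) · r_{P,x+s,v}(x̂). -/

import Mathlib

/-- The capped length of a path `p` under impact vector `x`:
`d_x(p) = min(∑_{v ∈ p} f_v(x_v), T)`. -/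
noncomputable def dLen {V : Type*} (f : V → ℝ → ℝ) (T : ℝ) (x : V → ℝ) (p : List V) : ℝ :=
  min ((p.map (fun v => f v (x v))).sum) T

/-- `r_{P,w,v}(a) = ∑_{p∈P} (d_{w+⟨v,a⟩}(p) − d_w(p))`. -/
noncomputable def rGain {V : Type*} [DecidableEq V] (f : V → ℝ → ℝ) (T : ℝ)
    (P : Finset (List V)) (w : V → ℝ) (v : V) (a : ℝ) : ℝ :=
  ∑ p ∈ P, (dLen f T (w + Pi.single v a) p - dLen f T w p)


private lemma min_two (A T x y : ℝ) (hx : 0 ≤ x) (hy : 0 ≤ y) :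
    min (A + (x + y)) T + min A T ≤ min (A + x) T + min (A + y) T := by
  simp only [min_def]; split_ifs <;> linarith

private lemma core {ι : Type*} [DecidableEq ι] (t : Finset ι) (g : ι → ℝ)
    (hg : ∀ i, 0 ≤ g i) (A T : ℝ) :
    min (A + ∑ i ∈ t, g i) T - min A T ≤ ∑ i ∈ t, (min (A + g i) T - min A T) := by
  induction t using Finset.induction_on with
  | empty => simp
  | @insert a s ha ih =>
    rw [Finset.sum_insert ha, Finset.sum_insert ha]
    have h2 := min_two A T (g a) (∑ i ∈ s, g i) (hg a) (Finset.sum_nonneg fun i _ => hg i)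
    linarith

private lemma list_sum_sub {V : Type*} (p : List V) (g h : V → ℝ) :
    (p.map fun v => g v - h v).sum = (p.map g).sum - (p.map h).sum := by
  induction p with
  | nil => simp
  | cons a l ih => simp [ih]; ring

private lemma Lsum_eq {V : Type*} [Fintype V] [DecidableEq V] (f : V → ℝ → ℝ)
    (p : List V) (hp : p.Nodup) (w w' : V → ℝ) :
    (p.map fun v => f v (w' v)).sum
      = (p.map fun v => f v (w v)).sum
        + ∑ u : V, (if u ∈ p then f u (w' u) - f u (w u) else 0) := by
  have h1 : ∑ u : V, (if u ∈ p then f u (w' u) - f u (w u) else 0)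
      = ∑ u ∈ p.toFinset, (f u (w' u) - f u (w u)) := by
    rw [← Finset.sum_filter]
    congr 1
    ext u; simp
  rw [h1, List.sum_toFinset _ hp, list_sum_sub]
  ring

private lemma dLen_mono {V : Type*} (f : V → ℝ → ℝ) (T : ℝ)
    (hf : ∀ v, MonotoneOn (f v) (Set.Ici 0))
    (w1 w2 : V → ℝ) (h1 : ∀ u, 0 ≤ w1 u) (h12 : ∀ u, w1 u ≤ w2 u) (p : List V) :
    dLen f T w1 p ≤ dLen f T w2 p := by
  unfold dLen
  exact min_le_min
    (List.sum_le_sum fun v _ => hf v (h1 v) (Set.mem_Ici.2 ((h1 v).trans (h12 v))) (h12 v))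
    le_rfl
set_option maxHeartbeats 1000000 in
theorem stmt5 {V : Type*} [Fintype V] [DecidableEq V]
    (f : V → ℝ → ℝ) (T : ℝ) (hT : 0 < T)
    (hf : ∀ v, MonotoneOn (f v) (Set.Ici 0))
    (hf0 : ∀ v y, 0 ≤ y → 0 ≤ f v y)
    (P : Finset (List V)) (hP : ∀ p ∈ P, p.Nodup)
    (x s sStar : V → ℝ)
    (hx : ∀ u, 0 ≤ x u) (hs : ∀ u, 0 ≤ s u) (hsStar : ∀ u, 0 ≤ sStar u)
    (hopt : ∀ p ∈ P, T ≤ dLen f T (x + sStar) p)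
    (sCirc : V → ℝ) (hsCirc : ∀ u, sCirc u = max (sStar u - s u) 0)
    (ϵ : ℝ) (hϵ0 : 0 ≤ ϵ) (hϵ1 : ϵ < 1)
    (v : V) (xhat : ℝ) (hxhat : 0 < xhat)
    (hgreedy : ∀ u, 0 < sCirc u →
      (1 - ϵ) * (rGain f T P (x + s) u (sCirc u) / sCirc u)
        ≤ rGain f T P (x + s) v xhat / xhat) :
    ∑ p ∈ P, (T - dLen f T (x + s) p) ≤
      ((∑ u : V, sStar u) / (xhat * (1 - ϵ))) * rGain f T P (x + s) v xhat := by
  classical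
  set w := x + s with hw
  have hwnn : ∀ u, 0 ≤ w u := fun u => add_nonneg (hx u) (hs u)
  have hσnn : ∀ u, 0 ≤ sCirc u := fun u => by rw [hsCirc]; exact le_max_right _ _
  have h1ϵ : 0 < 1 - ϵ := by linarith
  have hB : ∀ u, 0 ≤ f u (w u + sCirc u) - f u (w u) := fun u =>
    sub_nonneg.2 (hf u (Set.mem_Ici.2 (hwnn u))
      (Set.mem_Ici.2 (add_nonneg (hwnn u) (hσnn u))) (le_add_of_nonneg_right (hσnn u)))
  -- Step A : per-path bound
  have stepA : ∀ p ∈ P, T - dLen f T w p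
      ≤ ∑ u : V, (dLen f T (w + Pi.single u (sCirc u)) p - dLen f T w p) := by
    intro p hpP
    have hp := hP p hpP
    set A : ℝ := (p.map fun v => f v (w v)).sum with hA
    set B : V → ℝ := fun u => f u (w u + sCirc u) - f u (w u) with hBdef
    have hbnn : ∀ u : V, 0 ≤ (if u ∈ p then B u else 0) := by
      intro u; split_ifs; exacts [hB u, le_rfl]
    have hdw : dLen f T w p = min A T := rfl
    have dLen_add : ∀ δ : V → ℝ, dLen f T (w + δ) p
        = min (A + ∑ u : V, (if u ∈ p then f u (w u + δ u) - f u (w u) else 0)) T := by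
      intro δ
      unfold dLen
      rw [Lsum_eq f p hp w (w + δ)]
      rfl
    have hLσ : dLen f T (w + sCirc) p = min (A + ∑ u : V, (if u ∈ p then B u else 0)) T :=
      dLen_add sCirc
    have hLu : ∀ u : V, dLen f T (w + Pi.single u (sCirc u)) p
        = min (A + (if u ∈ p then B u else 0)) T := by
      intro u
      rw [dLen_add (Pi.single u (sCirc u))]
      congr 2
      have : (fun u' : V => if u' ∈ p then
            f u' (w u' + (Pi.single u (sCirc u) : V → ℝ) u') - f u' (w u') else 0)
          = fun u' : V => if u' = u then (if u ∈ p then B u else 0) else 0 := by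
        funext u'
        rcases eq_or_ne u' u with rfl | hne
        · simp [Pi.single_apply, hBdef]
        · simp [Pi.single_apply, hne]
      rw [this, Finset.sum_ite_eq' Finset.univ u]
      simp
    -- T is reached by w + sCirc
    have hT' : T ≤ dLen f T (w + sCirc) p := by
      refine le_trans (hopt p hpP) (dLen_mono f T hf (x + sStar) (w + sCirc) ?_ ?_ p)
      · intro u; exact add_nonneg (hx u) (hsStar u)
      · intro u
        have : sStar u ≤ s u + sCirc u := by
          rw [hsCirc]; have := le_max_left (sStar u - s u) (0:ℝ); linarith
        simp only [hw, Pi.add_apply]; linarith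
    have hcore := core (Finset.univ : Finset V)
      (fun u => if u ∈ p then B u else 0) hbnn A T
    have hsum : ∑ u : V, (dLen f T (w + Pi.single u (sCirc u)) p - dLen f T w p)
        = ∑ u : V, (min (A + (if u ∈ p then B u else 0)) T - min A T) := by
      refine Finset.sum_congr rfl fun u _ => by rw [hLu u, hdw]
    rw [hsum, hdw]
    have hTle : min (A + ∑ u : V, (if u ∈ p then B u else 0)) T = T := by
      have h2 : T ≤ min (A + ∑ u : V, (if u ∈ p then B u else 0)) T := hLσ ▸ hT'
      exact le_antisymm (min_le_right _ _) h2
    linarith [hcore, hTle.ge, hTle.le]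
  -- Step B : sum over paths
  have stepB : ∑ p ∈ P, (T - dLen f T w p) ≤ ∑ u : V, rGain f T P w u (sCirc u) := by
    calc ∑ p ∈ P, (T - dLen f T w p)
        ≤ ∑ p ∈ P, ∑ u : V, (dLen f T (w + Pi.single u (sCirc u)) p - dLen f T w p) :=
          Finset.sum_le_sum stepA
      _ = ∑ u : V, rGain f T P w u (sCirc u) := by
          simp only [rGain]
          exact Finset.sum_comm
  -- nonnegativity of the gain at v
  have hrv : 0 ≤ rGain f T P w v xhat := by
    refine Finset.sum_nonneg fun p _ => sub_nonneg.2 ?_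
    refine dLen_mono f T hf w (w + (Pi.single v xhat : V → ℝ)) hwnn (fun u => ?_) p
    have : 0 ≤ (Pi.single v xhat : V → ℝ) u := by
      rw [Pi.single_apply]; split_ifs <;> simp [hxhat.le]
    simp only [Pi.add_apply]; linarith
  have hC : 0 ≤ rGain f T P w v xhat / (xhat * (1 - ϵ)) :=
    div_nonneg hrv (by positivity)
  -- Step C : per-vertex bound
  have stepC : ∀ u : V, rGain f T P w u (sCirc u)
      ≤ sCirc u * (rGain f T P w v xhat / (xhat * (1 - ϵ))) := by
    intro u
    rcases (hσnn u).lt_or_eq with hpos | hzero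
    · have hg := hgreedy u hpos
      have hσ0 : sCirc u ≠ 0 := hpos.ne'
      have hx0 : xhat ≠ 0 := hxhat.ne'
      rw [← mul_div_assoc, le_div_iff₀ (by positivity : (0:ℝ) < xhat * (1 - ϵ))]
      have h3 := mul_le_mul_of_nonneg_left hg (mul_pos hxhat hpos).le
      have e1 : (xhat * sCirc u) * ((1 - ϵ) * (rGain f T P w u (sCirc u) / sCirc u))
          = rGain f T P w u (sCirc u) * (xhat * (1 - ϵ)) := by
        field_simp
      have e2 : (xhat * sCirc u) * (rGain f T P w v xhat / xhat)
          = sCirc u * rGain f T P w v xhat := by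
        field_simp
      rw [e1, e2] at h3
      exact h3
    · rw [← hzero]
      simp [rGain, Pi.single_zero]
  -- Step D : assemble
  have hσS : ∑ u : V, sCirc u ≤ ∑ u : V, sStar u := by
    refine Finset.sum_le_sum fun u _ => ?_
    rw [hsCirc]
    exact max_le (by linarith [hs u]) (hsStar u)
  calc ∑ p ∈ P, (T - dLen f T w p)
      ≤ ∑ u : V, rGain f T P w u (sCirc u) := stepB
    _ ≤ ∑ u : V, sCirc u * (rGain f T P w v xhat / (xhat * (1 - ϵ))) :=
        Finset.sum_le_sum fun u _ => stepC u
    _ = (∑ u : V, sCirc u) * (rGain f T P w v xhat / (xhat * (1 - ϵ))) :=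
        (Finset.sum_mul _ _ _).symm
    _ ≤ (∑ u : V, sStar u) * (rGain f T P w v xhat / (xhat * (1 - ϵ))) :=
        mul_le_mul_of_nonneg_right hσS hC
    _ = ((∑ u : V, sStar u) / (xhat * (1 - ϵ))) * rGain f T P w v xhat := by ring
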